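/- Let X be a finite type with Fintype.card X = m, let σ : Equiv.Perm X, and let P : Matrix X X ℤ be the permutation matrix of σ (P x y = 1 if σ y = x, else 0). For k ≥ 1 let j_k(σ) be the number of k-cycles of σ (with j_1(σ) the number of fixed points). Then in Polynomial ℤ: det((1 : Matrix X X (Polynomial ℤ)) - X • P.map C) = ∏_{k=1}^{m} (1 - X^k)^{j_k(σ)}, where C : ℤ → Polynomial ℤ is the constant-coefficient embedding. -/

import Mathlib

open Polynomial Equiv Equiv.Perm Matrix Finset

noncomputable def Gm {Y : Type*} [Fintype Y] [DecidableEq Y] (σ : Equiv.Perm Y) :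
    Matrix Y Y (Polynomial ℤ) :=
  (1 : Matrix Y Y (Polynomial ℤ)) -
    (Polynomial.X : Polynomial ℤ) • Matrix.of (fun x y => if σ y = x then (1:Polynomial ℤ) else 0)

theorem key {Y : Type*} [Fintype Y] [DecidableEq Y] (σ : Equiv.Perm Y) :
    (Gm σ).det = (1 - Polynomial.X) ^ (Fintype.card Y - σ.support.card) *
        (σ.cycleType.map fun k => 1 - (Polynomial.X:Polynomial ℤ) ^ k).prod := by
  induction σ using Equiv.Perm.cycle_induction_on with
  | base_one =>
    have : Gm (1 : Equiv.Perm Y) = (1 - Polynomial.X : Polynomial ℤ) • 1 := by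
      apply Matrix.ext; intro x y
      by_cases h : x = y
      · subst h; simp [Gm]
      · simp [Gm, Matrix.one_apply, h, Ne.symm h]
    simp [this, Matrix.det_smul]
  | base_cycles c hc =>
    classical
    have entry : ∀ x y : Y, Gm c x y =
        (if x = y then (1:Polynomial ℤ) else 0) - Polynomial.X * (if c y = x then 1 else 0) := by
      intro x y; simp [Gm, Matrix.one_apply]
    have hdich : ∀ π : Equiv.Perm Y, (∀ i, π i = i ∨ π i = c i) → π = 1 ∨ π = c := by
      intro π hπ
      by_cases h1 : π = 1
      · exact Or.inl h1
      right
      obtain ⟨i₀, hi₀⟩ : ∃ i, π i ≠ i := by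
        by_contra h
        push_neg at h
        exact h1 (Equiv.ext fun i => h i)
      have hQ : ∀ n : ℕ, π ((c ^ n) i₀) ≠ (c ^ n) i₀ := by
        intro n
        induction n with
        | zero => simpa using hi₀
        | succ n ih =>
          have hstep : (c ^ (n + 1)) i₀ = c ((c ^ n) i₀) := by
            rw [pow_succ']; rfl
          set y := (c ^ n) i₀ with hy
          have hpy : π y = c y := (hπ y).resolve_left ih
          have hcy : c y ≠ y := hpy ▸ ih
          rw [hstep]
          intro hcon
          have : π (c y) = π y := by rw [hcon, hpy]
          exact hcy (π.injective this)
      apply Equiv.ext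
      intro x
      by_cases hx : c x = x
      · rcases hπ x with h | h
        · rw [h, hx]
        · exact h
      · have hci₀ : c i₀ ≠ i₀ := by
          rcases hπ i₀ with h | h
          · exact absurd h hi₀
          · rw [← h]; exact hi₀
        obtain ⟨n, hn⟩ := hc.exists_pow_eq hci₀ hx
        have := hQ n
        rw [hn] at this
        exact (hπ x).resolve_left this
    have hzero : ∀ π : Equiv.Perm Y, π ≠ 1 → π ≠ c → (∏ i, Gm c (π i) i) = 0 := by
      intro π h1 h2
      by_cases hall : ∀ i, π i = i ∨ π i = c i
      · rcases hdich π hall with h | h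
        · exact absurd h h1
        · exact absurd h h2
      push_neg at hall
      obtain ⟨i, hi1, hi2⟩ := hall
      apply Finset.prod_eq_zero (Finset.mem_univ i)
      rw [entry, if_neg hi1, if_neg (fun h => hi2 h.symm), mul_zero, sub_zero]
    have hne1 : (1 : Equiv.Perm Y) ≠ c := fun h => hc.ne_one h.symm
    rw [Matrix.det_apply]
    rw [← Finset.sum_subset (Finset.subset_univ ({1, c} : Finset (Equiv.Perm Y)))
      (fun π _ hπ => by
        simp only [Finset.mem_insert, Finset.mem_singleton] at hπ
        push_neg at hπ
        rw [hzero π hπ.1 hπ.2, smul_zero])]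
    rw [Finset.sum_insert (by simpa using hne1), Finset.sum_singleton]
    have hprod1 : (∏ i, Gm c ((1 : Equiv.Perm Y) i) i)
        = (1 - Polynomial.X) ^ (Fintype.card Y - c.support.card) := by
      have hA : (∏ i ∈ c.support, Gm c ((1 : Equiv.Perm Y) i) i) = 1 :=
        Finset.prod_eq_one (fun i hi => by
          rw [Equiv.Perm.one_apply, entry, if_pos rfl,
            if_neg (Equiv.Perm.mem_support.mp hi), mul_zero, sub_zero])
      have hB : (∏ i ∈ c.supportᶜ, Gm c ((1 : Equiv.Perm Y) i) i)
          = (1 - Polynomial.X) ^ (Fintype.card Y - c.support.card) := by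
        rw [Finset.prod_congr rfl (fun i hi => by
          rw [Equiv.Perm.one_apply, entry, if_pos rfl,
            if_pos (Equiv.Perm.notMem_support.mp (Finset.mem_compl.mp hi)), mul_one]),
          Finset.prod_const, Finset.card_compl]
      rw [← Finset.prod_mul_prod_compl c.support, hA, hB, one_mul]
    have hprodc : (∏ i, Gm c (c i) i)
        = (-Polynomial.X) ^ c.support.card *
          (1 - Polynomial.X) ^ (Fintype.card Y - c.support.card) := by
      have hA : (∏ i ∈ c.support, Gm c (c i) i) = (-Polynomial.X) ^ c.support.card := by
        rw [Finset.prod_congr rfl (fun i hi => by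
          rw [entry, if_neg (Equiv.Perm.mem_support.mp hi), if_pos rfl, mul_one, zero_sub]),
          Finset.prod_const]
      have hB : (∏ i ∈ c.supportᶜ, Gm c (c i) i)
          = (1 - Polynomial.X) ^ (Fintype.card Y - c.support.card) := by
        rw [Finset.prod_congr rfl (fun i hi => by
          rw [Equiv.Perm.notMem_support.mp (Finset.mem_compl.mp hi), entry, if_pos rfl,
            if_pos (Equiv.Perm.notMem_support.mp (Finset.mem_compl.mp hi)), mul_one]),
          Finset.prod_const, Finset.card_compl]
      rw [← Finset.prod_mul_prod_compl c.support, hA, hB]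
    rw [hprod1, hprodc, hc.cycleType]
    rw [Equiv.Perm.sign_one, hc.sign]
    simp only [Multiset.map_coe, List.map_cons, List.map_nil, Multiset.prod_coe,
      List.prod_cons, List.prod_nil, mul_one, one_smul, Units.smul_def, Units.val_neg,
      Units.val_pow_eq_pow_val, Units.val_one, zsmul_eq_mul,
      Multiset.map_singleton, Multiset.prod_singleton]
    push_cast
    rw [neg_pow (Polynomial.X : Polynomial ℤ) c.support.card]
    have hsq : ((-1 : Polynomial ℤ)) ^ c.support.card * (-1) ^ c.support.card = 1 := by
      rw [← mul_pow]; norm_num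
    linear_combination (-(Polynomial.X ^ c.support.card) *
      (1 - Polynomial.X) ^ (Fintype.card Y - c.support.card)) * hsq
  | induction_disjoint σ τ hd hc hσ hτ =>
    have hmul : Gm σ * Gm τ = (1 - Polynomial.X : Polynomial ℤ) • Gm (σ * τ) := by
      have hM : (Matrix.of (fun x y => if σ y = x then (1:Polynomial ℤ) else 0)) *
          (Matrix.of (fun x y => if τ y = x then (1:Polynomial ℤ) else 0)) =
          Matrix.of (fun x y => if (σ * τ) y = x then (1:Polynomial ℤ) else 0) := by
        apply Matrix.ext; intro x y
        simp only [Matrix.mul_apply, Matrix.of_apply, Equiv.Perm.mul_apply]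
        rw [Finset.sum_eq_single (τ y)]
        · simp; congr
        · intro b _ hb
          rw [if_neg (show ¬ τ y = b from fun h => hb h.symm), mul_zero]
        · simp
      have hadd : (Matrix.of (fun x y => if σ y = x then (1:Polynomial ℤ) else 0)) +
          (Matrix.of (fun x y => if τ y = x then (1:Polynomial ℤ) else 0)) =
          1 + Matrix.of (fun x y => if (σ * τ) y = x then (1:Polynomial ℤ) else 0) := by
        apply Matrix.ext; intro x y
        simp only [Matrix.add_apply, Matrix.of_apply, Matrix.one_apply, Equiv.Perm.mul_apply]
        rcases hd y with h1 | h1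
        · rcases hd (τ y) with h2 | h2
          · simp only [h1, h2]
            exact congrArg₂ (· + ·) (if_congr eq_comm rfl rfl) rfl
          · have h3 : τ y = y := τ.injective h2
            simp only [h3, h1]
            exact congrArg₂ (· + ·) (if_congr eq_comm rfl rfl) rfl
        · simp only [h1]
          rw [add_comm]
          exact congrArg₂ (· + ·) (if_congr eq_comm rfl rfl) rfl
      have e1 : Gm σ * Gm τ = 1 - (Polynomial.X : Polynomial ℤ) •
          ((Matrix.of (fun x y => if σ y = x then (1:Polynomial ℤ) else 0)) +
           (Matrix.of (fun x y => if τ y = x then (1:Polynomial ℤ) else 0))) +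
          ((Polynomial.X * Polynomial.X : Polynomial ℤ)) •
            Matrix.of (fun x y => if (σ * τ) y = x then (1:Polynomial ℤ) else 0) := by
        simp only [Gm, sub_mul, mul_sub, Matrix.one_mul, Matrix.mul_one, Matrix.smul_mul,
          Matrix.mul_smul, smul_smul, hM, smul_add]
        abel
      rw [e1, hadd, smul_add]
      simp only [Gm]
      module
    have hdet : (Gm σ).det * (Gm τ).det
        = (1 - Polynomial.X : Polynomial ℤ) ^ (Fintype.card Y) * (Gm (σ * τ)).det := by
      rw [← Matrix.det_mul, hmul, Matrix.det_smul]
    have hne : ((1 - Polynomial.X : Polynomial ℤ) ^ (Fintype.card Y)) ≠ 0 := by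
      apply pow_ne_zero
      intro h
      have := congrArg (fun p => Polynomial.coeff p 1) h
      simpa [Polynomial.coeff_one] using this
    apply mul_left_cancel₀ hne
    rw [← hdet, hσ, hτ, Equiv.Perm.Disjoint.cycleType_mul hd, (congrArg Finset.card (Equiv.Perm.Disjoint.support_mul hd) : (σ * τ).support.card = (σ.support ∪ τ.support).card),
      Finset.card_union_of_disjoint (Equiv.Perm.Disjoint.disjoint_support hd)]
    have h1 : σ.support.card ≤ Fintype.card Y := Finset.card_le_univ _
    have h2 : τ.support.card ≤ Fintype.card Y := Finset.card_le_univ _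
    have h3 : σ.support.card + τ.support.card ≤ Fintype.card Y := by
      rw [← Finset.card_union_of_disjoint (Equiv.Perm.Disjoint.disjoint_support hd)]; exact Finset.card_le_univ _
    rw [Multiset.map_add, Multiset.prod_add]
    rw [show (1-Polynomial.X:Polynomial ℤ)^(Fintype.card Y - σ.support.card) *
      (σ.cycleType.map fun k => 1 - (Polynomial.X:Polynomial ℤ) ^ k).prod *
      ((1-Polynomial.X:Polynomial ℤ)^(Fintype.card Y - τ.support.card) *
      (τ.cycleType.map fun k => 1 - (Polynomial.X:Polynomial ℤ) ^ k).prod)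
      = (1-Polynomial.X:Polynomial ℤ)^((Fintype.card Y - σ.support.card) + (Fintype.card Y - τ.support.card)) *
        ((σ.cycleType.map fun k => 1 - (Polynomial.X:Polynomial ℤ) ^ k).prod *
        (τ.cycleType.map fun k => 1 - (Polynomial.X:Polynomial ℤ) ^ k).prod) from by rw [pow_add]; ring]
    rw [show Fintype.card Y - σ.support.card + (Fintype.card Y - τ.support.card)
      = Fintype.card Y + (Fintype.card Y - (σ.support.card + τ.support.card)) by omega]
    rw [pow_add]; ring

/-- factorization of the reverse characteristic polynomial of a permutation
matrix, used in the third Lemma of the paper.  For a permutation `σ` of an `m`-element set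
`X` with permutation matrix `P` (`P x y = 1` if `σ y = x`, else `0`) and `j k` the number of
`k`-cycles of `σ` (fixed points counting as `1`-cycles), in `Polynomial ℤ` we have
`det(1 - X • P) = ∏_{k=1}^{m} (1 - X^k)^{j_k}`. -/
theorem stmt_7 (X : Type*) [Fintype X] [DecidableEq X] (m : ℕ) (hm : Fintype.card X = m)
    (σ : Equiv.Perm X) (P : Matrix X X ℤ)
    (hP : ∀ x y, P x y = if σ y = x then 1 else 0)
    (j : ℕ → ℕ)
    (hj1 : j 1 = m - σ.support.card)
    (hjk : ∀ k, 2 ≤ k → j k = Multiset.count k σ.cycleType) :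
    Matrix.det ((1 : Matrix X X (Polynomial ℤ)) -
        (Polynomial.X : Polynomial ℤ) • P.map Polynomial.C) =
      ∏ k ∈ Finset.Icc 1 m, (1 - (Polynomial.X : Polynomial ℤ) ^ k) ^ j k := by
  subst hm
  have hPC : P.map Polynomial.C
      = Matrix.of (fun x y => if σ y = x then (1:Polynomial ℤ) else 0) := by
    apply Matrix.ext; intro x y
    simp [Matrix.map_apply, hP, apply_ite Polynomial.C]
  have hG : (1 : Matrix X X (Polynomial ℤ)) - (Polynomial.X : Polynomial ℤ) • P.map Polynomial.C
      = Gm σ := by rw [hPC]; rfl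
  rw [hG, key σ]
  have hsupp : σ.support.card ≤ Fintype.card X := Finset.card_le_univ _
  have hsub : σ.cycleType.toFinset ⊆ Finset.Icc 2 (Fintype.card X) := by
    intro k hk
    rw [Multiset.mem_toFinset] at hk
    rw [Finset.mem_Icc]
    refine ⟨Equiv.Perm.two_le_of_mem_cycleType hk, le_trans ?_ hsupp⟩
    rw [← Equiv.Perm.sum_cycleType σ]
    exact Multiset.single_le_sum (fun _ _ => Nat.zero_le _) _ hk
  have hprod2 : (σ.cycleType.map fun k => 1 - (Polynomial.X : Polynomial ℤ) ^ k).prod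
      = ∏ k ∈ Finset.Icc 2 (Fintype.card X),
          (1 - (Polynomial.X : Polynomial ℤ) ^ k) ^ (σ.cycleType.count k) := by
    rw [Finset.prod_multiset_map_count]
    exact Finset.prod_subset hsub (fun k _ hk => by
      rw [Multiset.count_eq_zero_of_notMem (fun h => hk (Multiset.mem_toFinset.mpr h)),
        pow_zero])
  rcases Nat.eq_zero_or_pos (Fintype.card X) with h0 | h1
  · have hs0 : σ.support.card = 0 := by omega
    have hσ1 : σ = 1 := by
      rw [← Equiv.Perm.support_eq_empty_iff]
      exact Finset.card_eq_zero.mp hs0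
    rw [h0, hσ1]
    simp
  · have hIcc : Finset.Icc 1 (Fintype.card X) = insert 1 (Finset.Icc 2 (Fintype.card X)) := by
      ext a
      simp only [Finset.mem_Icc, Finset.mem_insert]
      omega
    rw [hIcc, Finset.prod_insert (by simp), pow_one, hj1,
      Finset.prod_congr rfl (fun k hk => by
        rw [hjk k (Finset.mem_Icc.mp hk).1]), hprod2]
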